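/- ODE positivity lemma: let t₀ < T, let Δ : [t₀,T) → ℝ satisfy Δ(t) ≥ Δ_min > 0 for all t, let F : [t₀,T) → ℝ satisfy inf_{t₀ ≤ t ≤ t*} F(t) > −∞ for every t* < T, and let K : [t₀,T) → ℝ be differentiable with K(t₀) > 0 and K'(t) ≥ (1/Δ(t))·K(t)²·(K(t) + F(t)) for all t ∈ [t₀,T). Then K(t) > 0 for all t ∈ [t₀,T). -/

import Mathlib

open Real

/-- ODE positivity lemma on `[t₀, T)` (with `T ≤ ∞`, modeled by `T : EReal`):
if `K(t₀) > 0` and `K'(t) ≥ (1/Δ(t))·K(t)²·(K(t) + F(t))` where `Δ ≥ Δ_min > 0` and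
`F` is bounded below on every compact subinterval `[t₀, t*]` with `t* < T`,
then `K(t) > 0` on `[t₀, T)`. -/
theorem ode_positivity
    (t₀ : ℝ) (T : EReal) (ht₀T : (t₀ : EReal) < T)
    (Δmin : ℝ) (hΔmin : 0 < Δmin)
    (Δ F K K' : ℝ → ℝ)
    (hΔ : ∀ t : ℝ, t₀ ≤ t → (t : EReal) < T → Δmin ≤ Δ t)
    (hF : ∀ tstar : ℝ, t₀ ≤ tstar → (tstar : EReal) < T →
      ∃ m : ℝ, ∀ t ∈ Set.Icc t₀ tstar, m ≤ F t)
    (hK0 : 0 < K t₀)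
    (hK : ∀ t : ℝ, t₀ ≤ t → (t : EReal) < T →
      HasDerivWithinAt K (K' t) (Set.Ici t₀) t)
    (hK' : ∀ t : ℝ, t₀ ≤ t → (t : EReal) < T →
      (1 / Δ t) * K t ^ 2 * (K t + F t) ≤ K' t) :
    ∀ t : ℝ, t₀ ≤ t → (t : EReal) < T → 0 < K t := by
  intro t₁ ht₁ ht₁T
  by_contra hneg
  push_neg at hneg
  -- every point of `[t₀, t₁]` is below `T`
  have hltT : ∀ t : ℝ, t ≤ t₁ → (t : EReal) < T := fun t ht =>
    lt_of_le_of_lt (EReal.coe_le_coe_iff.mpr ht) ht₁T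
  -- bound from below for F on `[t₀, t₁]`
  obtain ⟨m, hm⟩ := hF t₁ ht₁ ht₁T
  -- K is continuous on `[t₀, t₁]`
  have hKcont : ContinuousOn K (Set.Icc t₀ t₁) := by
    intro t ht
    exact ((hK t ht.1 (hltT t ht.2)).continuousWithinAt).mono Set.Icc_subset_Ici_self
  -- maximum of K on `[t₀, t₁]`
  obtain ⟨x₀, hx₀, hx₀max⟩ :=
    isCompact_Icc.exists_isMaxOn (Set.nonempty_Icc.mpr ht₁) hKcont
  set M : ℝ := K x₀ with hMdef
  have hM : ∀ t ∈ Set.Icc t₀ t₁, K t ≤ M := hx₀max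
  have hM0 : 0 < M := lt_of_lt_of_le hK0 (hM t₀ ⟨le_refl _, ht₁⟩)
  set μ : ℝ := min m 0 with hμdef
  have hμ0 : μ ≤ 0 := min_le_right _ _
  have hμm : μ ≤ m := min_le_left _ _
  set C : ℝ := -μ * M / Δmin with hCdef
  have hC0 : 0 ≤ C := by
    apply div_nonneg _ hΔmin.le
    nlinarith
  -- key derivative bound: wherever 0 ≤ K t on [t₀,t₁], K' t ≥ -C * K t
  have key : ∀ t ∈ Set.Icc t₀ t₁, 0 ≤ K t → -C * K t ≤ K' t := by
    intro t ht hKt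
    have hΔt : Δmin ≤ Δ t := hΔ t ht.1 (hltT t ht.2)
    have hΔtpos : 0 < Δ t := lt_of_lt_of_le hΔmin hΔt
    have hFt : m ≤ F t := hm t ht
    have hKtM : K t ≤ M := hM t ht
    have h1 : (1 / Δ t) * K t ^ 2 * (K t + F t) ≤ K' t := hK' t ht.1 (hltT t ht.2)
    have hu : 0 < 1 / Δ t := by positivity
    have huw : 1 / Δ t ≤ 1 / Δmin := one_div_le_one_div_of_le hΔmin hΔt
    have hw : 0 < 1 / Δmin := by positivity
    -- chain of inequalities
    have s1 : (1 / Δ t) * K t ^ 2 * μ ≤ (1 / Δ t) * K t ^ 2 * (K t + F t) := by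
      have hμKF : μ ≤ K t + F t := le_trans hμm (by linarith)
      have h := mul_le_mul_of_nonneg_left hμKF
        (show (0:ℝ) ≤ 1 / Δ t * K t ^ 2 by positivity)
      linarith [h]
    have s2 : (1 / Δmin) * K t ^ 2 * μ ≤ (1 / Δ t) * K t ^ 2 * μ := by
      have hz : K t ^ 2 * μ ≤ 0 :=
        mul_nonpos_iff.mpr (Or.inl ⟨sq_nonneg _, hμ0⟩)
      have h := mul_le_mul_of_nonpos_right huw hz
      linarith [h]
    have s3 : (1 / Δmin) * (M * K t) * μ ≤ (1 / Δmin) * K t ^ 2 * μ := by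
      have hsq : K t ^ 2 ≤ M * K t := by nlinarith
      have h := mul_le_mul_of_nonneg_left (mul_le_mul_of_nonpos_right hsq hμ0) hw.le
      linarith [h]
    have s4 : -C * K t = (1 / Δmin) * (M * K t) * μ := by
      field_simp [hCdef]
      rw [hCdef, div_mul_eq_mul_div, div_mul_cancel₀ _ hΔmin.ne']
      ring
    linarith
  -- the set of times where K ≤ 0
  set S : Set ℝ := {t ∈ Set.Icc t₀ t₁ | K t ≤ 0} with hSdef
  have hSne : S.Nonempty := ⟨t₁, ⟨⟨ht₁, le_refl _⟩, hneg⟩⟩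
  have hSclosed : IsClosed S := by
    have := hKcont.preimage_isClosed_of_isClosed isClosed_Icc (isClosed_Iic (a := (0:ℝ)))
    exact this
  have hSbdd : BddBelow S := ⟨t₀, fun t ht => ht.1.1⟩
  set s : ℝ := sInf S with hsdef
  have hsS : s ∈ S := hSclosed.csInf_mem hSne hSbdd
  have hst₀ : t₀ ≤ s := hsS.1.1
  have hst₁ : s ≤ t₁ := hsS.1.2
  have hKs : K s ≤ 0 := hsS.2
  have hst₀' : t₀ < s := by
    rcases lt_or_eq_of_le hst₀ with h | h
    · exact h
    · exact absurd hKs (by rw [← h]; linarith)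
  -- K > 0 strictly before s
  have hKpos : ∀ t, t₀ ≤ t → t < s → 0 < K t := by
    intro t ht hts
    by_contra h
    push_neg at h
    have : t ∈ S := ⟨⟨ht, le_trans hts.le hst₁⟩, h⟩
    exact absurd (csInf_le hSbdd this) (not_le.mpr hts)
  -- the auxiliary function f t = K t * exp (C * t) is monotone on [t₀, s]
  set f : ℝ → ℝ := fun t => K t * Real.exp (C * t) with hfdef
  have hfmono : MonotoneOn f (Set.Icc t₀ s) := by
    apply monotoneOn_of_hasDerivWithinAt_nonneg (convex_Icc t₀ s)
      (f' := fun t => K' t * Real.exp (C * t) + K t * (Real.exp (C * t) * C))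
    · exact ((hKcont.mono (Set.Icc_subset_Icc_right hst₁)).mul
        ((Real.continuous_exp.comp (continuous_const.mul continuous_id)).continuousOn))
    · intro t ht
      rw [interior_Icc] at ht
      have hKt : HasDerivAt K (K' t) t := by
        apply (hK t ht.1.le (hltT t (le_trans ht.2.le hst₁))).hasDerivAt
        exact Ici_mem_nhds ht.1
      have hexp : HasDerivAt (fun t => Real.exp (C * t)) (Real.exp (C * t) * C) t := by
        simpa using (HasDerivAt.exp ((hasDerivAt_id t).const_mul C))
      exact (hKt.mul hexp).hasDerivWithinAt
    · intro t ht
      rw [interior_Icc] at ht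
      have hKt0 : 0 < K t := hKpos t ht.1.le ht.2
      have hb : -C * K t ≤ K' t := key t ⟨ht.1.le, le_trans ht.2.le hst₁⟩ hKt0.le
      have h := mul_le_mul_of_nonneg_right hb (Real.exp_pos (C * t)).le
      nlinarith [h]
  have h1 : f t₀ ≤ f s := hfmono ⟨le_refl _, hst₀⟩ ⟨hst₀, le_refl _⟩ hst₀
  have h2 : 0 < f t₀ := by
    have := Real.exp_pos (C * t₀)
    simp only [hfdef]
    positivity
  have h3 : f s ≤ 0 :=
    mul_nonpos_iff.mpr (Or.inr ⟨hKs, (Real.exp_pos (C * s)).le⟩)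
  linarith
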